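/- arXiv:1105.4137 — 2 statements merged into one kernel-verified Lean document; each statement's English description precedes it below -/
import Mathlib

section
/- Let n ≥ 1 and m ≥ 1. There exists a constant C = C(n,m) > 0 such that for every finite sequence I of indices in {1,…,n} with |I| = m, every smooth function u on an open subset of ℝ^{1+n}, every α ∈ {0,1,…,n}, and every point of the domain: |H^I ∂_α u| ≤ |∂_α H^I u| + C Σ_{|J| < m} Σ_{β=0}^{n} |∂_β H^J u|, where the inner sum runs over all finite sequences J of indices in {1,…,n} of length strictly less than m. -/
open MeasureTheory

noncomputable section

variable {n : ℕ}

/-- The partial derivative `∂_α` on `ℝ^{1+n}`; index `0` is the time variable `t`. -/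
def pd (α : Fin (n + 1)) (u : (Fin (n + 1) → ℝ) → ℝ) : (Fin (n + 1) → ℝ) → ℝ :=
  fun p => fderiv ℝ u p (Pi.single α 1)

/-- The Euclidean length `r = |x|` of the spatial part of a point of `ℝ^{1+n}`. -/
def rad (p : Fin (n + 1) → ℝ) : ℝ := Real.sqrt (∑ i : Fin n, p i.succ ^ 2)

/-- The Lorentz boost `H_j = t ∂_j + x^j ∂_t`. -/
def Lb (j : Fin n) (u : (Fin (n + 1) → ℝ) → ℝ) : (Fin (n + 1) → ℝ) → ℝ :=
  fun p => p 0 * pd j.succ u p + p j.succ * pd 0 u p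

/-- The iterated boost `H^I = H_{i₁} ∘ ⋯ ∘ H_{i_m}` for a finite sequence `I`. -/
def HI : List (Fin n) → ((Fin (n + 1) → ℝ) → ℝ) → ((Fin (n + 1) → ℝ) → ℝ)
  | [], u => u
  | j :: I, u => Lb j (HI I u)

/-- The point `(√(T²+|x|²), x)` of the hyperboloid `H_T` over `x ∈ ℝⁿ`. -/
def hyp (T : ℝ) (x : Fin n → ℝ) : Fin (n + 1) → ℝ :=
  Fin.cons (Real.sqrt (T ^ 2 + ∑ i, x i ^ 2)) x

/-! ### Auxiliary lemmas -/

lemma le_infty_aux (k : ℕ) : (k : WithTop ℕ∞) ≤ ((⊤:ℕ∞) : WithTop ℕ∞) :=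
  ENat.natCast_le_of_coe_top_le_withTop le_rfl k

lemma contDiffOn_pd {U : Set (Fin (n+1) → ℝ)} (hU : IsOpen U) {u : (Fin (n+1) → ℝ) → ℝ}
    (hu : ContDiffOn ℝ (⊤:ℕ∞) u U) (α : Fin (n+1)) : ContDiffOn ℝ (⊤:ℕ∞) (pd α u) U := by
  have h1 : ContDiffOn ℝ (⊤:ℕ∞) (fderiv ℝ u) U := hu.fderiv_of_isOpen hU le_rfl
  exact (ContinuousLinearMap.apply ℝ ℝ (Pi.single α 1)).contDiff.comp_contDiffOn h1

lemma diffAt_of_smooth {U : Set (Fin (n+1) → ℝ)} (hU : IsOpen U) {u : (Fin (n+1) → ℝ) → ℝ}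
    (hu : ContDiffOn ℝ (⊤:ℕ∞) u U) {p} (hp : p ∈ U) : DifferentiableAt ℝ u p := by
  have h1 : DifferentiableOn ℝ u U := hu.differentiableOn (by simp)
  exact h1.differentiableAt (hU.mem_nhds hp)

/-- Schwarz symmetry of second derivatives, for `pd`. -/
lemma pd_comm {U : Set (Fin (n+1) → ℝ)} (hU : IsOpen U) {u : (Fin (n+1) → ℝ) → ℝ}
    (hu : ContDiffOn ℝ (⊤:ℕ∞) u U)
    (β γ : Fin (n+1)) {p} (hp : p ∈ U) : pd β (pd γ u) p = pd γ (pd β u) p := by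
  have hat : ContDiffAt ℝ (⊤:ℕ∞) u p := hu.contDiffAt (hU.mem_nhds hp)
  have hsym : IsSymmSndFDerivAt ℝ u p := hat.isSymmSndFDerivAt (by rw [minSmoothness_of_isRCLikeNormedField]; exact_mod_cast le_infty_aux 2)
  have hd1 : DifferentiableAt ℝ (fderiv ℝ u) p := by
    have h2 := hat.fderiv_right (m := (⊤:ℕ∞)) le_rfl
    exact h2.differentiableAt (by simp)
  have e : ∀ β' γ' : Fin (n+1), pd β' (pd γ' u) p
      = fderiv ℝ (fderiv ℝ u) p (Pi.single β' 1) (Pi.single γ' 1) := by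
    intro β' γ'
    have : pd γ' u = fun q =>
        (fderiv ℝ u q) ((fun _ : Fin (n+1) → ℝ => (Pi.single γ' 1 : Fin (n+1) → ℝ)) q) := rfl
    rw [pd, this, fderiv_clm_apply hd1 (differentiableAt_const _)]
    simp
  rw [e, e]
  exact hsym _ _

lemma diffAt_coord (i : Fin (n+1)) (p : Fin (n+1) → ℝ) :
    DifferentiableAt ℝ (fun q : Fin (n+1) → ℝ => q i) p :=
  (ContinuousLinearMap.proj (R := ℝ) (φ := fun _ : Fin (n+1) => ℝ) i).differentiableAt

lemma pd_coord (i β : Fin (n+1)) (p : Fin (n+1) → ℝ) :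
    pd β (fun q : Fin (n+1) → ℝ => q i) p = if i = β then 1 else 0 := by
  have h : (fun q : Fin (n+1) → ℝ => q i)
      = (ContinuousLinearMap.proj (R := ℝ) (φ := fun _ : Fin (n+1) => ℝ) i) := rfl
  rw [pd, h, ContinuousLinearMap.fderiv]
  simp [Pi.single_apply]

lemma pd_add {f g : (Fin (n+1) → ℝ) → ℝ} {p} (hf : DifferentiableAt ℝ f p)
    (hg : DifferentiableAt ℝ g p) (β : Fin (n+1)) :
    pd β (fun q => f q + g q) p = pd β f p + pd β g p := by
  rw [pd, fderiv_fun_add hf hg]; rfl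

lemma pd_const_mul {g : (Fin (n+1) → ℝ) → ℝ} {p} (hg : DifferentiableAt ℝ g p) (c : ℝ)
    (β : Fin (n+1)) : pd β (fun q => c * g q) p = c * pd β g p := by
  rw [pd, fderiv_const_mul hg]; rfl

lemma pd_coord_mul (i : Fin (n+1)) {g : (Fin (n+1) → ℝ) → ℝ} {p} (hg : DifferentiableAt ℝ g p)
    (β : Fin (n+1)) :
    pd β (fun q => q i * g q) p = (if i = β then 1 else 0) * g p + p i * pd β g p := by
  rw [pd, fderiv_fun_mul (diffAt_coord i p) hg]
  have := pd_coord i β p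
  rw [pd] at this
  simp only [ContinuousLinearMap.add_apply, ContinuousLinearMap.smul_apply, smul_eq_mul, this]
  show p i * pd β g p + g p * _ = _
  ring

lemma contDiffOn_coord (i : Fin (n+1)) (U : Set (Fin (n+1) → ℝ)) :
    ContDiffOn ℝ (⊤:ℕ∞) (fun q : Fin (n+1) → ℝ => q i) U :=
  ((ContinuousLinearMap.proj (R := ℝ) (φ := fun _ : Fin (n+1) => ℝ) i).contDiff).contDiffOn

lemma contDiffOn_Lb {U : Set (Fin (n+1) → ℝ)} (hU : IsOpen U) {u : (Fin (n+1) → ℝ) → ℝ}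
    (hu : ContDiffOn ℝ (⊤:ℕ∞) u U) (j : Fin n) : ContDiffOn ℝ (⊤:ℕ∞) (Lb j u) U := by
  exact ((contDiffOn_coord 0 U).mul (contDiffOn_pd hU hu j.succ)).add
    ((contDiffOn_coord j.succ U).mul (contDiffOn_pd hU hu 0))

lemma contDiffOn_HI {U : Set (Fin (n+1) → ℝ)} (hU : IsOpen U) {u : (Fin (n+1) → ℝ) → ℝ}
    (hu : ContDiffOn ℝ (⊤:ℕ∞) u U) : ∀ I : List (Fin n), ContDiffOn ℝ (⊤:ℕ∞) (HI I u) U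
  | [] => hu
  | j :: I => contDiffOn_Lb hU (contDiffOn_HI hU hu I) j

/-- The index of the correction term appearing in `[H_j, ∂_β]`. -/
def corrIdx (j : Fin n) (β : Fin (n+1)) : Fin (n+1) := if β = 0 then j.succ else 0

/-- The coefficient of the correction term appearing in `[H_j, ∂_β]`. -/
def corrCoef (j : Fin n) (β : Fin (n+1)) : ℝ :=
  if β = 0 then -1 else if β = j.succ then -1 else 0

lemma abs_corrCoef_le (j : Fin n) (β : Fin (n+1)) : |corrCoef j β| ≤ 1 := by
  unfold corrCoef; split_ifs <;> norm_num

/-- The commutator identity `H_j ∂_β f = ∂_β H_j f + c ∂_γ f` for a single boost. -/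
lemma comm_single {U : Set (Fin (n+1) → ℝ)} (hU : IsOpen U) {f : (Fin (n+1) → ℝ) → ℝ}
    (hf : ContDiffOn ℝ (⊤:ℕ∞) f U) (j : Fin n) (β : Fin (n+1)) {p} (hp : p ∈ U) :
    Lb j (pd β f) p = pd β (Lb j f) p + corrCoef j β * pd (corrIdx j β) f p := by
  have hd : ∀ γ : Fin (n+1), DifferentiableAt ℝ (pd γ f) p :=
    fun γ => diffAt_of_smooth hU (contDiffOn_pd hU hf γ) hp
  have h1 : pd β (Lb j f) p
      = ((if (0:Fin (n+1)) = β then 1 else 0) * pd j.succ f p + p 0 * pd β (pd j.succ f) p)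
      + ((if j.succ = β then 1 else 0) * pd 0 f p + p j.succ * pd β (pd 0 f) p) := by
    have hA : DifferentiableAt ℝ (fun q : Fin (n+1) → ℝ => q 0 * pd j.succ f q) p :=
      (diffAt_coord 0 p).mul (hd j.succ)
    have hB : DifferentiableAt ℝ (fun q : Fin (n+1) → ℝ => q j.succ * pd 0 f q) p :=
      (diffAt_coord j.succ p).mul (hd 0)
    have : pd β (Lb j f) p = pd β (fun q => q 0 * pd j.succ f q + q j.succ * pd 0 f q) p := rfl
    rw [this, pd_add hA hB, pd_coord_mul 0 (hd j.succ), pd_coord_mul j.succ (hd 0)]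
  have h2 : Lb j (pd β f) p = p 0 * pd β (pd j.succ f) p + p j.succ * pd β (pd 0 f) p := by
    show p 0 * pd j.succ (pd β f) p + p j.succ * pd 0 (pd β f) p = _
    rw [pd_comm hU hf j.succ β hp, pd_comm hU hf 0 β hp]
  rw [h1, h2]
  unfold corrIdx corrCoef
  rcases eq_or_ne β 0 with hb0 | hb0
  · subst hb0
    have : ¬ (j.succ = (0:Fin (n+1))) := Fin.succ_ne_zero j
    simp [this]
    ring
  · rcases eq_or_ne β j.succ with hbj | hbj
    · subst hbj
      simp [hb0, Ne.symm hb0]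
      ring
    · simp [hb0, Ne.symm hb0, hbj, Ne.symm hbj]

/-- Error-term data: (list `J`, index `β`, coefficient `c`), meaning `c * pd β (HI J u)`. -/
abbrev ETerm (n : ℕ) := List (Fin n) × Fin (n+1) × ℝ

/-- The sum of the error terms encoded by a list `L` of `ETerm`s. -/
def Err (L : List (ETerm n)) (u : (Fin (n+1) → ℝ) → ℝ) : (Fin (n+1) → ℝ) → ℝ :=
  fun p => (L.map fun e => e.2.2 * pd e.2.1 (HI e.1 u) p).sum

lemma Err_nil (u : (Fin (n+1) → ℝ) → ℝ) : Err ([] : List (ETerm n)) u = fun _ => 0 := rfl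

lemma Err_cons (e : ETerm n) (L : List (ETerm n)) (u : (Fin (n+1) → ℝ) → ℝ) (p) :
    Err (e :: L) u p = e.2.2 * pd e.2.1 (HI e.1 u) p + Err L u p := by
  simp [Err]

lemma Err_append (L M : List (ETerm n)) (u : (Fin (n+1) → ℝ) → ℝ) (p) :
    Err (L ++ M) u p = Err L u p + Err M u p := by
  simp [Err]

lemma pd_congr {f g : (Fin (n+1) → ℝ) → ℝ} {U : Set (Fin (n+1) → ℝ)} (hU : IsOpen U)
    (h : ∀ q ∈ U, f q = g q) {p} (hp : p ∈ U) (β : Fin (n+1)) : pd β f p = pd β g p := by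
  have he : f =ᶠ[nhds p] g := Filter.eventuallyEq_of_mem (hU.mem_nhds hp) h
  rw [pd, pd, he.fderiv_eq]

lemma diffAt_Err {U : Set (Fin (n+1) → ℝ)} (hU : IsOpen U) {u : (Fin (n+1) → ℝ) → ℝ}
    (hu : ContDiffOn ℝ (⊤:ℕ∞) u U) (L : List (ETerm n)) {p} (hp : p ∈ U) :
    DifferentiableAt ℝ (Err L u) p := by
  induction L with
  | nil => rw [Err_nil]; exact differentiableAt_const 0
  | cons e L ih =>
    have h1 : DifferentiableAt ℝ (fun q => e.2.2 * pd e.2.1 (HI e.1 u) q) p :=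
      (diffAt_of_smooth hU (contDiffOn_pd hU (contDiffOn_HI hU hu e.1) e.2.1) hp).const_mul _
    have : Err (e :: L) u = fun q => e.2.2 * pd e.2.1 (HI e.1 u) q + Err L u q := by
      funext q; rw [Err_cons]
    rw [this]
    exact h1.add ih

lemma pd_Err {U : Set (Fin (n+1) → ℝ)} (hU : IsOpen U) {u : (Fin (n+1) → ℝ) → ℝ}
    (hu : ContDiffOn ℝ (⊤:ℕ∞) u U) (L : List (ETerm n)) {p} (hp : p ∈ U) (γ : Fin (n+1)) :
    pd γ (Err L u) p = (L.map fun e => e.2.2 * pd γ (pd e.2.1 (HI e.1 u)) p).sum := by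
  induction L with
  | nil =>
    rw [Err_nil]
    simp [pd, fderiv_const]
  | cons e L ih =>
    have hd : DifferentiableAt ℝ (pd e.2.1 (HI e.1 u)) p :=
      diffAt_of_smooth hU (contDiffOn_pd hU (contDiffOn_HI hU hu e.1) e.2.1) hp
    have h1 : DifferentiableAt ℝ (fun q => e.2.2 * pd e.2.1 (HI e.1 u) q) p := hd.const_mul _
    have hfun : Err (e :: L) u = fun q => e.2.2 * pd e.2.1 (HI e.1 u) q + Err L u q := by
      funext q; rw [Err_cons]
    rw [hfun, pd_add h1 (diffAt_Err hU hu L hp), pd_const_mul hd, ih]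
    simp

lemma list_sum_add {α : Type*} (L : List α) (f g : α → ℝ) :
    (L.map f).sum + (L.map g).sum = (L.map fun a => f a + g a).sum := by
  induction L with
  | nil => simp
  | cons a L ih => simp only [List.map_cons, List.sum_cons, ← ih]; ring

lemma list_sum_mul_left {α : Type*} (L : List α) (c : ℝ) (f : α → ℝ) :
    c * (L.map f).sum = (L.map fun a => c * f a).sum := by
  induction L with
  | nil => simp
  | cons a L ih => simp only [List.map_cons, List.sum_cons, ← ih]; ring

/-- Key identity: `H^I ∂_α u = ∂_α H^I u + error`, where the error is a signed sum of
terms `c ⬝ ∂_β H^J u` with `|J| < |I|` and `|c| ≤ 1`, at most `2^|I| - 1` of them. -/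
lemma key_comm (I : List (Fin n)) (α : Fin (n+1)) :
    ∃ L : List (ETerm n),
      L.length + 1 ≤ 2 ^ I.length ∧
      (∀ e ∈ L, e.1.length < I.length ∧ |e.2.2| ≤ 1) ∧
      ∀ U : Set (Fin (n+1) → ℝ), IsOpen U → ∀ u : (Fin (n+1) → ℝ) → ℝ,
        ContDiffOn ℝ (⊤:ℕ∞) u U → ∀ p ∈ U,
          HI I (pd α u) p = pd α (HI I u) p + Err L u p := by
  induction I with
  | nil =>
    refine ⟨[], by simp, by simp, ?_⟩
    intro U hU u hu p hp
    simp [HI, Err_nil]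
  | cons j I' ih =>
    obtain ⟨L, hlen, hcond, hid⟩ := ih
    refine ⟨(I', corrIdx j α, corrCoef j α)
        :: ((L.map fun e => (j :: e.1, e.2.1, e.2.2))
          ++ (L.map fun e => (e.1, corrIdx j e.2.1, e.2.2 * corrCoef j e.2.1))), ?_, ?_, ?_⟩
    · simp only [List.length_cons, List.length_append, List.length_map, List.length_ofFn]
      have : 2 ^ (I'.length + 1) = 2 ^ I'.length + 2 ^ I'.length := by ring
      omega
    · intro e he
      simp only [List.mem_cons, List.mem_append, List.mem_map] at he
      rcases he with rfl | ⟨⟨a, ha, rfl⟩ | ⟨a, ha, rfl⟩⟩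
      · exact ⟨by simp, abs_corrCoef_le j α⟩
      · refine ⟨by simpa using (hcond a ha).1, (hcond a ha).2⟩
      · refine ⟨by simp [Nat.lt_succ_of_lt (hcond a ha).1], ?_⟩
        calc |a.2.2 * corrCoef j a.2.1| = |a.2.2| * |corrCoef j a.2.1| := abs_mul _ _
          _ ≤ 1 * 1 := by
              exact mul_le_mul (hcond a ha).2 (abs_corrCoef_le _ _) (abs_nonneg _) zero_le_one
          _ = 1 := by norm_num
    · intro U hU u hu p hp
      have hv : ContDiffOn ℝ (⊤:ℕ∞) (HI I' u) U := contDiffOn_HI hU hu I'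
      have hdiff : ∀ (J : List (Fin n)) (γ : Fin (n+1)),
          DifferentiableAt ℝ (pd γ (HI J u)) p :=
        fun J γ => diffAt_of_smooth hU (contDiffOn_pd hU (contDiffOn_HI hU hu J) γ) hp
      -- Step A: differentiate the inductive identity
      have stepA : ∀ γ : Fin (n+1), pd γ (HI I' (pd α u)) p
          = pd γ (pd α (HI I' u)) p + pd γ (Err L u) p := by
        intro γ
        have h1 : pd γ (HI I' (pd α u)) p
            = pd γ (fun q => pd α (HI I' u) q + Err L u q) p :=
          pd_congr hU (fun q hq => hid U hU u hu q hq) hp γ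
        rw [h1, pd_add (hdiff I' α) (diffAt_Err hU hu L hp)]
      -- Step B: expand the boost
      have stepB : HI (j :: I') (pd α u) p
          = Lb j (pd α (HI I' u)) p + (p 0 * pd j.succ (Err L u) p
              + p j.succ * pd 0 (Err L u) p) := by
        show p 0 * pd j.succ (HI I' (pd α u)) p + p j.succ * pd 0 (HI I' (pd α u)) p = _
        rw [stepA j.succ, stepA 0]
        show _ = (p 0 * pd j.succ (pd α (HI I' u)) p + p j.succ * pd 0 (pd α (HI I' u)) p) + _
        ring
      -- Step C: main commutator
      have stepC : Lb j (pd α (HI I' u)) p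
          = pd α (HI (j :: I') u) p + corrCoef j α * pd (corrIdx j α) (HI I' u) p :=
        comm_single hU hv j α hp
      -- Step D: commute the boost past the error terms
      have stepD : p 0 * pd j.succ (Err L u) p + p j.succ * pd 0 (Err L u) p
          = Err (L.map fun e => (j :: e.1, e.2.1, e.2.2)) u p
            + Err (L.map fun e => (e.1, corrIdx j e.2.1, e.2.2 * corrCoef j e.2.1)) u p := by
        rw [pd_Err hU hu L hp j.succ, pd_Err hU hu L hp 0]
        rw [list_sum_mul_left, list_sum_mul_left, list_sum_add]
        unfold Err
        rw [List.map_map, List.map_map]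
        rw [list_sum_add]
        refine congrArg List.sum (List.map_congr_left ?_)
        intro e he
        have hcs := comm_single hU (contDiffOn_HI hU hu e.1) j e.2.1 hp
        have hlb : Lb j (pd e.2.1 (HI e.1 u)) p
            = p 0 * pd j.succ (pd e.2.1 (HI e.1 u)) p
              + p j.succ * pd 0 (pd e.2.1 (HI e.1 u)) p := rfl
        simp only [Function.comp]
        show p 0 * (e.2.2 * pd j.succ (pd e.2.1 (HI e.1 u)) p)
            + p j.succ * (e.2.2 * pd 0 (pd e.2.1 (HI e.1 u)) p)
          = e.2.2 * pd e.2.1 (HI (j :: e.1) u) p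
            + e.2.2 * corrCoef j e.2.1 * pd (corrIdx j e.2.1) (HI e.1 u) p
        have : p 0 * (e.2.2 * pd j.succ (pd e.2.1 (HI e.1 u)) p)
            + p j.succ * (e.2.2 * pd 0 (pd e.2.1 (HI e.1 u)) p)
          = e.2.2 * Lb j (pd e.2.1 (HI e.1 u)) p := by rw [hlb]; ring
        rw [this, hcs]
        show e.2.2 * (pd e.2.1 (Lb j (HI e.1 u)) p + _) = _
        have hHI : Lb j (HI e.1 u) = HI (j :: e.1) u := rfl
        rw [hHI]; ring
      -- Assemble
      rw [Err_cons, Err_append]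
      show HI (j :: I') (pd α u) p = pd α (HI (j :: I') u) p
        + (corrCoef j α * pd (corrIdx j α) (HI I' u) p + _)
      rw [stepB, stepC, stepD]
      ring

lemma list_abs_sum_le {α : Type*} (L : List α) (f : α → ℝ) :
    |(L.map f).sum| ≤ (L.map fun a => |f a|).sum := by
  induction L with
  | nil => simp
  | cons a L ih =>
    simp only [List.map_cons, List.sum_cons]
    exact (abs_add_le _ _).trans (add_le_add le_rfl ih)

/-- commutator estimate between iterated boosts and coordinate
derivatives: `|H^I ∂_α u| ≤ |∂_α H^I u| + C Σ_{|J| < m} Σ_β |∂_β H^J u|`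
for all sequences `I` of length `m`. -/
theorem boost_partial_commutator_estimate (n m : ℕ) (hn : 1 ≤ n) (hm : 1 ≤ m) :
    ∃ C > (0 : ℝ), ∀ I : Fin m → Fin n,
      ∀ U : Set (Fin (n + 1) → ℝ), IsOpen U →
      ∀ u : (Fin (n + 1) → ℝ) → ℝ, ContDiffOn ℝ (⊤ : ℕ∞) u U →
      ∀ α : Fin (n + 1), ∀ p ∈ U,
        |HI (List.ofFn I) (pd α u) p|
          ≤ |pd α (HI (List.ofFn I) u) p|
            + C * ∑ k ∈ Finset.range m, ∑ J : Fin k → Fin n, ∑ β : Fin (n + 1),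
                |pd β (HI (List.ofFn J) u) p| := by
  refine ⟨2 ^ m, by positivity, ?_⟩
  intro I U hU u hu α p hp
  obtain ⟨L, hlen, hcond, hid⟩ := key_comm (List.ofFn I) α
  rw [List.length_ofFn] at hlen hcond
  set S : ℝ := ∑ k ∈ Finset.range m, ∑ J : Fin k → Fin n, ∑ β : Fin (n + 1),
      |pd β (HI (List.ofFn J) u) p| with hS
  have hS0 : 0 ≤ S := Finset.sum_nonneg fun k _ => Finset.sum_nonneg fun J _ =>
    Finset.sum_nonneg fun β _ => abs_nonneg _
  have hterm : ∀ e ∈ L, |e.2.2 * pd e.2.1 (HI e.1 u) p| ≤ S := by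
    intro e he
    have hk : e.1.length < m := (hcond e he).1
    have h1 : |e.2.2 * pd e.2.1 (HI e.1 u) p| ≤ |pd e.2.1 (HI e.1 u) p| := by
      rw [abs_mul]
      calc |e.2.2| * |pd e.2.1 (HI e.1 u) p| ≤ 1 * |pd e.2.1 (HI e.1 u) p| :=
            mul_le_mul_of_nonneg_right (hcond e he).2 (abs_nonneg _)
        _ = _ := one_mul _
    have h2 : |pd e.2.1 (HI e.1 u) p| ≤ ∑ β : Fin (n+1), |pd β (HI e.1 u) p| :=
      Finset.single_le_sum (f := fun β => |pd β (HI e.1 u) p|)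
        (fun β _ => abs_nonneg _) (Finset.mem_univ _)
    have h3 : (∑ β : Fin (n+1), |pd β (HI e.1 u) p|)
        ≤ ∑ J : Fin e.1.length → Fin n, ∑ β : Fin (n+1), |pd β (HI (List.ofFn J) u) p| := by
      have := Finset.single_le_sum
        (f := fun J : Fin e.1.length → Fin n => ∑ β : Fin (n+1), |pd β (HI (List.ofFn J) u) p|)
        (fun J _ => Finset.sum_nonneg fun β _ => abs_nonneg _) (Finset.mem_univ e.1.get)
      simpa [List.ofFn_get] using this
    have h4 : (∑ J : Fin e.1.length → Fin n, ∑ β : Fin (n+1), |pd β (HI (List.ofFn J) u) p|)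
        ≤ S := by
      rw [hS]
      exact Finset.single_le_sum
        (f := fun k => ∑ J : Fin k → Fin n, ∑ β : Fin (n+1), |pd β (HI (List.ofFn J) u) p|)
        (fun k _ => Finset.sum_nonneg fun J _ => Finset.sum_nonneg fun β _ => abs_nonneg _)
        (Finset.mem_range.2 hk)
    exact h1.trans (h2.trans (h3.trans h4))
  have hErr : |Err L u p| ≤ (2 ^ m : ℝ) * S := by
    have h1 : |Err L u p| ≤ (L.map fun e => |e.2.2 * pd e.2.1 (HI e.1 u) p|).sum :=
      list_abs_sum_le L _
    have h2 : (L.map fun e => |e.2.2 * pd e.2.1 (HI e.1 u) p|).sum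
        ≤ (L.map fun e => |e.2.2 * pd e.2.1 (HI e.1 u) p|).length • S := by
      refine List.sum_le_card_nsmul _ _ ?_
      intro x hx
      obtain ⟨e, he, rfl⟩ := List.mem_map.1 hx
      exact hterm e he
    have h3 : (L.map fun e => |e.2.2 * pd e.2.1 (HI e.1 u) p|).length • S
        = (L.length : ℝ) * S := by
      simp [nsmul_eq_mul]
    have h4 : (L.length : ℝ) * S ≤ (2 ^ m : ℝ) * S := by
      refine mul_le_mul_of_nonneg_right ?_ hS0
      have : (L.length : ℕ) ≤ 2 ^ m := by omega
      calc (L.length : ℝ) ≤ ((2 ^ m : ℕ) : ℝ) := by exact_mod_cast this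
        _ = (2 : ℝ) ^ m := by push_cast; ring
    calc |Err L u p| ≤ _ := h1
      _ ≤ _ := h2
      _ = _ := h3
      _ ≤ _ := h4
  have hiden := hid U hU u hu p hp
  rw [hiden]
  calc |pd α (HI (List.ofFn I) u) p + Err L u p|
      ≤ |pd α (HI (List.ofFn I) u) p| + |Err L u p| := abs_add_le _ _
    _ ≤ |pd α (HI (List.ofFn I) u) p| + 2 ^ m * S := by linarith
end
end

section
/- Let n ≥ 1 and p ≥ 1. There exists a constant C = C(n,p) > 0 such that for every smooth function u on an open subset of ℝ^{1+n}: (a) at every point with t > 0 and |x| ≤ t, Σ_{i=1}^{n} Σ_{|I| = p} |H^I ∂̄_i u| ≤ Σ_{i=1}^{n} Σ_{|I| = p} |∂̄_i H^I u| + C Σ_{|J| < p} Σ_{j=1}^{n} |∂̄_j H^J u|, where ∂̄_i u = ∂_i u + (x^i/t)∂_t u; (b) at every point with t > |x|, setting T = √(t²−|x|²), for every sequence I with |I| = p and every α ∈ {0,…,n}: |H^I ((T/t) ∂_α u)| ≤ |(T/t) ∂_α H^I u| + C Σ_{|J| < p} Σ_{β=0}^{n} |(T/t) ∂_β H^J u|.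 All sums over J run over finite sequences of indices in {1,…,n} of the indicated lengths. -/
open MeasureTheory

noncomputable section

variable {n : ℕ}

/-- The hyperboloid-tangential derivative `∂̄_i u = ∂_i u + (x^i/t)∂_t u`, as an
operator on functions. -/
def db (i : Fin n) (u : (Fin (n + 1) → ℝ) → ℝ) : (Fin (n + 1) → ℝ) → ℝ :=
  fun p => pd i.succ u p + (p i.succ / p 0) * pd 0 u p

/-- The operator `(T/t)∂_α` with `T = √(t² - |x|²)`, as an operator on functions. -/
def Td (α : Fin (n + 1)) (u : (Fin (n + 1) → ℝ) → ℝ) : (Fin (n + 1) → ℝ) → ℝ :=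
  fun p => (Real.sqrt ((p 0) ^ 2 - rad p ^ 2) / p 0) * pd α u p

namespace Aux

abbrev Pt (n : ℕ) := Fin (n + 1) → ℝ

lemma diffAt_of_contDiffOn {U : Set (Pt n)} (hU : IsOpen U) {v : Pt n → ℝ}
    (hv : ContDiffOn ℝ (⊤:ℕ∞) v U) {p : Pt n} (hp : p ∈ U) : DifferentiableAt ℝ v p :=
  (hv.contDiffAt (hU.mem_nhds hp)).differentiableAt (by simp)

lemma contDiffOn_pd {U : Set (Pt n)} (hU : IsOpen U) {v : Pt n → ℝ}
    (hv : ContDiffOn ℝ (⊤:ℕ∞) v U) (α : Fin (n+1)) : ContDiffOn ℝ (⊤:ℕ∞) (pd α v) U := by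
  have h1 : ContDiffOn ℝ (⊤:ℕ∞) (fderiv ℝ v) U :=
    hv.fderiv_of_isOpen hU (le_refl _)
  exact h1.clm_apply contDiffOn_const

-- pd of coordinate
lemma pd_coord (α β : Fin (n+1)) (p : Pt n) :
    pd α (fun q => q β) p = if β = α then 1 else 0 := by
  have : fderiv ℝ (fun q : Pt n => q β) p = ContinuousLinearMap.proj β :=
    (ContinuousLinearMap.proj β : Pt n →L[ℝ] ℝ).fderiv
  simp [pd, this, Pi.single_apply]

lemma pd_add {a b : Pt n → ℝ} {p : Pt n} (ha : DifferentiableAt ℝ a p)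
    (hb : DifferentiableAt ℝ b p) (α : Fin (n+1)) :
    pd α (fun q => a q + b q) p = pd α a p + pd α b p := by
  simp [pd, fderiv_fun_add ha hb]

lemma pd_mul {a b : Pt n → ℝ} {p : Pt n} (ha : DifferentiableAt ℝ a p)
    (hb : DifferentiableAt ℝ b p) (α : Fin (n+1)) :
    pd α (fun q => a q * b q) p = pd α a p * b p + a p * pd α b p := by
  simp [pd, fderiv_fun_mul ha hb]; ring

lemma pd_const (c : ℝ) (α : Fin (n+1)) (p : Pt n) : pd α (fun _ => c) p = 0 := by
  simp [pd]

lemma pd_congr {a b : Pt n → ℝ} {p : Pt n} (h : a =ᶠ[nhds p] b) (α : Fin (n+1)) :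
    pd α a p = pd α b p := by
  simp [pd, h.fderiv_eq]

lemma pd_pd_symm {U : Set (Pt n)} (hU : IsOpen U) {v : Pt n → ℝ}
    (hv : ContDiffOn ℝ (⊤:ℕ∞) v U) {p : Pt n} (hp : p ∈ U) (α β : Fin (n+1)) :
    pd α (pd β v) p = pd β (pd α v) p := by
  have hct : ContDiffAt ℝ (⊤:ℕ∞) v p := hv.contDiffAt (hU.mem_nhds hp)
  have hsym : IsSymmSndFDerivAt ℝ v p := by
    apply ContDiffAt.isSymmSndFDerivAt (n := (⊤:ℕ∞))
    · exact_mod_cast hct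
    · norm_cast
      simp [minSmoothness]
      exact WithTop.coe_le_coe.mpr (le_top : (2:ℕ∞) ≤ ⊤)
  have hd : DifferentiableAt ℝ (fderiv ℝ v) p := by
    have := hct.fderiv_right (m := (⊤:ℕ∞)) (by exact_mod_cast le_top)
    exact this.differentiableAt (by simp)
  have key : ∀ γ δ : Fin (n+1), pd γ (pd δ v) p
      = fderiv ℝ (fderiv ℝ v) p (Pi.single γ 1) (Pi.single δ 1) := by
    intro γ δ
    have : pd δ v = fun q => (fderiv ℝ v q) (Pi.single δ 1) := rfl
    rw [pd, this, fderiv_clm_apply hd (differentiableAt_const _)]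
    simp
  rw [key, key, hsym.eq]

end Aux

namespace Aux

lemma Lb_add {a b : Pt n → ℝ} {p : Pt n} (ha : DifferentiableAt ℝ a p)
    (hb : DifferentiableAt ℝ b p) (j : Fin n) :
    Lb j (fun q => a q + b q) p = Lb j a p + Lb j b p := by
  simp only [Lb, pd_add ha hb]; ring

lemma Lb_mul {a b : Pt n → ℝ} {p : Pt n} (ha : DifferentiableAt ℝ a p)
    (hb : DifferentiableAt ℝ b p) (j : Fin n) :
    Lb j (fun q => a q * b q) p = Lb j a p * b p + a p * Lb j b p := by
  simp only [Lb, pd_mul ha hb]; ring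

lemma Lb_const (c : ℝ) (j : Fin n) (p : Pt n) : Lb j (fun _ => c) p = 0 := by
  simp [Lb, pd_const]

lemma Lb_congr {a b : Pt n → ℝ} {p : Pt n} (h : a =ᶠ[nhds p] b) (j : Fin n) :
    Lb j a p = Lb j b p := by
  simp only [Lb, pd_congr h]

lemma contDiffOn_Lb {U : Set (Pt n)} (hU : IsOpen U) {v : Pt n → ℝ}
    (hv : ContDiffOn ℝ (⊤:ℕ∞) v U) (j : Fin n) : ContDiffOn ℝ (⊤:ℕ∞) (Lb j v) U := by
  have hc : ∀ β : Fin (n+1), ContDiffOn ℝ (⊤:ℕ∞) (fun q : Pt n => q β) U :=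
    fun β => (ContDiff.contDiffOn (by exact (contDiff_apply ℝ ℝ β)))
  exact ((hc 0).mul (contDiffOn_pd hU hv j.succ)).add
    ((hc j.succ).mul (contDiffOn_pd hU hv 0))


lemma contDiffOn_HI {U : Set (Pt n)} (hU : IsOpen U) {v : Pt n → ℝ}
    (hv : ContDiffOn ℝ (⊤:ℕ∞) v U) (I : List (Fin n)) : ContDiffOn ℝ (⊤:ℕ∞) (HI I v) U := by
  induction I with
  | nil => exact hv
  | cons j I ih => exact contDiffOn_Lb hU ih j

lemma Lb_pd {U : Set (Pt n)} (hU : IsOpen U) {v : Pt n → ℝ}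
    (hv : ContDiffOn ℝ (⊤:ℕ∞) v U) {p : Pt n} (hp : p ∈ U) (j : Fin n) (α : Fin (n+1)) :
    Lb j (pd α v) p = pd α (Lb j v) p
      - (if α = 0 then pd j.succ v p else if α = j.succ then pd 0 v p else 0) := by
  have hd : ∀ β : Fin (n+1), DifferentiableAt ℝ (pd β v) p :=
    fun β => diffAt_of_contDiffOn hU (contDiffOn_pd hU hv β) hp
  have hcd : ∀ β : Fin (n+1), DifferentiableAt ℝ (fun q : Pt n => q β) p :=
    fun β => (ContinuousLinearMap.proj β : Pt n →L[ℝ] ℝ).differentiableAt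
  have e1 : pd α (Lb j v) p
      = (if (0:Fin (n+1)) = α then 1 else 0) * pd j.succ v p + p 0 * pd α (pd j.succ v) p
        + ((if j.succ = α then 1 else 0) * pd 0 v p + p j.succ * pd α (pd 0 v) p) := by
    have : Lb j v = fun q => (fun q : Pt n => q 0 * pd j.succ v q) q
        + (fun q : Pt n => q j.succ * pd 0 v q) q := rfl
    rw [this, pd_add (a := fun q => q 0 * pd j.succ v q) (b := fun q => q j.succ * pd 0 v q)
      ((hcd 0).mul (hd j.succ)) ((hcd j.succ).mul (hd 0)),
      pd_mul (hcd 0) (hd j.succ), pd_mul (hcd j.succ) (hd 0), pd_coord, pd_coord]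
  have e2 : Lb j (pd α v) p = p 0 * pd α (pd j.succ v) p + p j.succ * pd α (pd 0 v) p := by
    rw [Lb, pd_pd_symm hU hv hp j.succ α, pd_pd_symm hU hv hp 0 α]
  rw [e1, e2]
  by_cases h0 : α = 0
  · subst h0; simp [Fin.succ_ne_zero j, (Fin.succ_ne_zero j).symm]; ring
  · by_cases hj : α = j.succ
    · subst hj; simp [Fin.succ_ne_zero j, eq_comm]; ring
    · simp [Ne.symm h0, Ne.symm hj, h0, hj]; try ring

end Aux

namespace Aux

def yv (i : Fin n) : Pt n → ℝ := fun p => p i.succ / p 0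

lemma isOpen_Om : IsOpen {p : Pt n | p 0 ≠ 0} :=
  isOpen_compl_singleton.preimage (continuous_apply 0)

lemma contDiffOn_coord (β : Fin (n+1)) (S : Set (Pt n)) :
    ContDiffOn ℝ (⊤:ℕ∞) (fun q : Pt n => q β) S :=
  (ContinuousLinearMap.proj β : Pt n →L[ℝ] ℝ).contDiff.contDiffOn

lemma contDiffOn_yv (i : Fin n) :
    ContDiffOn ℝ (⊤:ℕ∞) (yv i) {p : Pt n | p 0 ≠ 0} :=
  (contDiffOn_coord i.succ _).div (contDiffOn_coord 0 _) (fun _ hp => hp)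

lemma diffAt_yv {p : Pt n} (h : p 0 ≠ 0) (i : Fin n) : DifferentiableAt ℝ (yv i) p :=
  diffAt_of_contDiffOn isOpen_Om (contDiffOn_yv i) h

lemma pd_inv0 {p : Pt n} (h : p 0 ≠ 0) (α : Fin (n+1)) :
    pd α (fun q : Pt n => (q 0)⁻¹) p = -((p 0)^2)⁻¹ * (if (0:Fin (n+1)) = α then 1 else 0) := by
  have hf : HasFDerivAt (fun q : Pt n => (q 0)⁻¹)
      ((-((p 0)^2)⁻¹) • (ContinuousLinearMap.proj 0 : Pt n →L[ℝ] ℝ)) p :=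
    (hasDerivAt_inv h).comp_hasFDerivAt p
      (ContinuousLinearMap.proj 0 : Pt n →L[ℝ] ℝ).hasFDerivAt
  simp [pd, hf.fderiv, Pi.single_apply]

lemma diffAt_inv0 {p : Pt n} (h : p 0 ≠ 0) :
    DifferentiableAt ℝ (fun q : Pt n => (q 0)⁻¹) p :=
  ((hasDerivAt_inv h).comp_hasFDerivAt p
    (ContinuousLinearMap.proj 0 : Pt n →L[ℝ] ℝ).hasFDerivAt).differentiableAt

lemma diffAt_coord (p : Pt n) (β : Fin (n+1)) :
    DifferentiableAt ℝ (fun q : Pt n => q β) p :=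
  (ContinuousLinearMap.proj β : Pt n →L[ℝ] ℝ).differentiableAt

lemma pd_yv {p : Pt n} (h : p 0 ≠ 0) (i : Fin n) (α : Fin (n+1)) :
    pd α (yv i) p = (if i.succ = α then 1 else 0) * (p 0)⁻¹
      + p i.succ * (-((p 0)^2)⁻¹ * (if (0:Fin (n+1)) = α then 1 else 0)) := by
  have : yv i = fun q : Pt n => (fun q : Pt n => q i.succ) q * (fun q : Pt n => (q 0)⁻¹) q := by
    funext q; simp [yv, div_eq_mul_inv]
  rw [this, pd_mul (diffAt_coord p i.succ) (diffAt_inv0 h), pd_coord, pd_inv0 h]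

lemma Lb_yv {p : Pt n} (h : p 0 ≠ 0) (i j : Fin n) :
    Lb j (yv i) p = (if i = j then 1 else 0) - yv i p * yv j p := by
  rw [Lb, pd_yv h, pd_yv h]
  have h1 : (0:Fin (n+1)) ≠ j.succ := (Fin.succ_ne_zero j).symm
  have h2 : i.succ = j.succ ↔ i = j := Fin.succ_inj
  simp only [h1, if_neg h1, if_pos rfl, h2]
  by_cases hij : i = j
  · subst hij; simp [yv, Fin.succ_ne_zero i]; field_simp; ring
  · simp [hij, yv, Fin.succ_ne_zero i]; field_simp

end Aux

namespace Aux

def gf : Pt n → ℝ := fun p => p 0 ^ 2 - ∑ i : Fin n, p i.succ ^ 2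

def wf : Pt n → ℝ := fun p => Real.sqrt (gf p) / p 0

lemma rad_sq (p : Pt n) : rad p ^ 2 = ∑ i : Fin n, p i.succ ^ 2 :=
  Real.sq_sqrt (Finset.sum_nonneg fun i _ => sq_nonneg _)

lemma gf_eq (p : Pt n) : gf p = p 0 ^ 2 - rad p ^ 2 := by rw [gf, rad_sq]

lemma continuous_rad : Continuous (rad (n := n)) :=
  (continuous_finset_sum _ fun i _ => (continuous_apply i.succ).pow 2).sqrt

lemma isOpen_Om' : IsOpen {p : Pt n | rad p < p 0} :=
  isOpen_lt continuous_rad (continuous_apply 0)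

lemma Om'_pos {p : Pt n} (h : rad p < p 0) : 0 < p 0 :=
  lt_of_le_of_lt (Real.sqrt_nonneg _) h

lemma Om'_gf_pos {p : Pt n} (h : rad p < p 0) : 0 < gf p := by
  rw [gf_eq]
  have h0 : (0:ℝ) ≤ rad p := Real.sqrt_nonneg _
  nlinarith

lemma contDiff_gf : ContDiff ℝ (⊤:ℕ∞) (gf (n := n)) := by
  apply ContDiff.sub
  · exact (ContinuousLinearMap.proj 0 : Pt n →L[ℝ] ℝ).contDiff.pow 2
  · exact ContDiff.sum fun i _ =>
      (ContinuousLinearMap.proj i.succ : Pt n →L[ℝ] ℝ).contDiff.pow 2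

lemma contDiffOn_wf : ContDiffOn ℝ (⊤:ℕ∞) (wf (n:=n)) {p : Pt n | rad p < p 0} := by
  apply ContDiffOn.div
  · exact ContDiffOn.sqrt contDiff_gf.contDiffOn fun p hp => (Om'_gf_pos hp).ne'
  · exact contDiffOn_coord 0 _
  · exact fun p hp => (Om'_pos hp).ne'

lemma diffAt_wf {p : Pt n} (h : rad p < p 0) : DifferentiableAt ℝ (wf (n:=n)) p :=
  diffAt_of_contDiffOn isOpen_Om' contDiffOn_wf h

lemma pd_gf (p : Pt n) (α : Fin (n+1)) :
    pd α (gf (n:=n)) p = 2 * p 0 * (if (0:Fin (n+1)) = α then 1 else 0)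
      - ∑ i : Fin n, 2 * p i.succ * (if i.succ = α then 1 else 0) := by
  have hsq : ∀ β : Fin (n+1), pd α (fun q : Pt n => q β ^ 2) p
      = 2 * p β * (if β = α then 1 else 0) := by
    intro β
    have : (fun q : Pt n => q β ^ 2) = fun q : Pt n => (fun q : Pt n => q β) q * (fun q : Pt n => q β) q := by
      funext q; ring
    rw [this, pd_mul (diffAt_coord p β) (diffAt_coord p β), pd_coord]
    ring
  have hd : ∀ β : Fin (n+1), DifferentiableAt ℝ (fun q : Pt n => q β ^ 2) p :=
    fun β => (diffAt_coord p β).pow 2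
  have hsum : DifferentiableAt ℝ (fun q : Pt n => ∑ i : Fin n, q i.succ ^ 2) p :=
    DifferentiableAt.fun_sum fun i _ => hd i.succ
  have e : gf (n:=n) = fun q : Pt n => (fun q : Pt n => q 0 ^ 2) q
      + (fun q : Pt n => -∑ i : Fin n, q i.succ ^ 2) q := by
    funext q; simp [gf]; ring
  rw [e, pd_add (hd 0) hsum.fun_neg, hsq]
  have : pd α (fun q : Pt n => -∑ i : Fin n, q i.succ ^ 2) p
      = -pd α (fun q : Pt n => ∑ i : Fin n, q i.succ ^ 2) p := by
    simp [pd, fderiv_neg]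
  rw [this]
  have : pd α (fun q : Pt n => ∑ i : Fin n, q i.succ ^ 2) p
      = ∑ i : Fin n, pd α (fun q : Pt n => q i.succ ^ 2) p := by
    simp only [pd]
    rw [fderiv_fun_sum fun i _ => hd i.succ]
    simp
  rw [this]
  simp only [hsq]
  ring

lemma pd_sqrt_gf {p : Pt n} (h : rad p < p 0) (α : Fin (n+1)) :
    pd α (fun q : Pt n => Real.sqrt (gf q)) p
      = 1 / (2 * Real.sqrt (gf p)) * pd α (gf (n:=n)) p := by
  have hf := (contDiff_gf.differentiable (by norm_cast) p).hasFDerivAt.sqrt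
    (Om'_gf_pos h).ne'
  simp [pd, hf.fderiv]

lemma diffAt_sqrt_gf {p : Pt n} (h : rad p < p 0) :
    DifferentiableAt ℝ (fun q : Pt n => Real.sqrt (gf q)) p :=
  ((contDiff_gf.differentiable (by norm_cast) p).hasFDerivAt.sqrt
    (Om'_gf_pos h).ne').differentiableAt

lemma Lb_wf {p : Pt n} (h : rad p < p 0) (j : Fin n) :
    Lb j (wf (n:=n)) p = -(yv j p) * wf p := by
  have h0 : p 0 ≠ 0 := (Om'_pos h).ne'
  have hg : (0:ℝ) < gf p := Om'_gf_pos h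
  have hs : Real.sqrt (gf p) ≠ 0 := (Real.sqrt_pos.mpr hg).ne'
  have e : wf (n:=n) = fun q : Pt n => (fun q : Pt n => Real.sqrt (gf q)) q * (fun q : Pt n => (q 0)⁻¹) q := by
    funext q; simp [wf, div_eq_mul_inv]
  have key : ∀ α : Fin (n+1), pd α (wf (n:=n)) p
      = (1 / (2 * Real.sqrt (gf p)) * pd α (gf (n:=n)) p) * (p 0)⁻¹
        + Real.sqrt (gf p) * (-((p 0)^2)⁻¹ * (if (0:Fin (n+1)) = α then 1 else 0)) := by
    intro α
    rw [e, pd_mul (diffAt_sqrt_gf h) (diffAt_inv0 h0), pd_sqrt_gf h, pd_inv0 h0]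
  have hsum : ∀ j : Fin n, (∑ i : Fin n, 2 * p i.succ * (if i.succ = j.succ then 1 else 0)) = 2 * p j.succ := by
    intro j
    have e : ∀ i : Fin n, (2 * p i.succ * if i.succ = j.succ then 1 else 0)
        = (if i = j then 2 * p i.succ else 0) := by
      intro i
      by_cases hij : i = j
      · subst hij; simp
      · simp [hij, fun h => hij (Fin.succ_inj.mp h)]
    rw [Finset.sum_congr rfl fun i _ => e i]
    simp
  have hgg : Real.sqrt (gf p) * Real.sqrt (gf p) = gf p := Real.mul_self_sqrt hg.le
  rw [Lb, key, key, pd_gf, pd_gf]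
  rw [if_neg (Fin.succ_ne_zero j).symm, if_pos rfl, hsum]
  simp only [yv, wf, Fin.succ_ne_zero, if_false, mul_zero, Finset.sum_const_zero]
  field_simp
  ring
end Aux


namespace Aux

lemma db_eq (i : Fin n) (v : Pt n → ℝ) :
    db i v = fun p => pd i.succ v p + yv i p * pd 0 v p := rfl

lemma Td_eq (α : Fin (n+1)) (v : Pt n → ℝ) :
    Td α v = fun p => wf p * pd α v p := by
  funext p; rw [Td, wf, gf_eq]

lemma contDiffOn_db {U : Set (Pt n)} (hU : IsOpen U) {v : Pt n → ℝ}
    (hv : ContDiffOn ℝ (⊤:ℕ∞) v U) (i : Fin n) :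
    ContDiffOn ℝ (⊤:ℕ∞) (db i v) (U ∩ {p : Pt n | p 0 ≠ 0}) := by
  rw [db_eq]
  exact ((contDiffOn_pd hU hv i.succ).mono Set.inter_subset_left).add
    (((contDiffOn_yv i).mono Set.inter_subset_right).mul
      ((contDiffOn_pd hU hv 0).mono Set.inter_subset_left))

lemma diffAt_db {U : Set (Pt n)} (hU : IsOpen U) {v : Pt n → ℝ}
    (hv : ContDiffOn ℝ (⊤:ℕ∞) v U) {p : Pt n} (hp : p ∈ U) (h0 : p 0 ≠ 0) (i : Fin n) :
    DifferentiableAt ℝ (db i v) p :=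
  diffAt_of_contDiffOn (hU.inter isOpen_Om) (contDiffOn_db hU hv i) ⟨hp, h0⟩

lemma contDiffOn_Td {U : Set (Pt n)} (hU : IsOpen U) {v : Pt n → ℝ}
    (hv : ContDiffOn ℝ (⊤:ℕ∞) v U) (α : Fin (n+1)) :
    ContDiffOn ℝ (⊤:ℕ∞) (Td α v) (U ∩ {p : Pt n | rad p < p 0}) := by
  rw [Td_eq]
  exact (contDiffOn_wf.mono Set.inter_subset_right).mul
    ((contDiffOn_pd hU hv α).mono Set.inter_subset_left)

lemma diffAt_Td {U : Set (Pt n)} (hU : IsOpen U) {v : Pt n → ℝ}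
    (hv : ContDiffOn ℝ (⊤:ℕ∞) v U) {p : Pt n} (hp : p ∈ U) (h0 : rad p < p 0) (α : Fin (n+1)) :
    DifferentiableAt ℝ (Td α v) p :=
  diffAt_of_contDiffOn (hU.inter isOpen_Om') (contDiffOn_Td hU hv α) ⟨hp, h0⟩

lemma comm_db {U : Set (Pt n)} (hU : IsOpen U) {v : Pt n → ℝ}
    (hv : ContDiffOn ℝ (⊤:ℕ∞) v U) {p : Pt n} (hp : p ∈ U) (h0 : p 0 ≠ 0) (i j : Fin n) :
    Lb j (db i v) p = db i (Lb j v) p - yv i p * db j v p := by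
  have hd : ∀ β : Fin (n+1), DifferentiableAt ℝ (pd β v) p :=
    fun β => diffAt_of_contDiffOn hU (contDiffOn_pd hU hv β) hp
  have e : db i v = fun q => pd i.succ v q + (fun q => yv i q * pd 0 v q) q := rfl
  rw [e, Lb_add (b := fun q => yv i q * pd 0 v q) (hd i.succ) ((diffAt_yv h0 i).mul (hd 0)),
    Lb_mul (diffAt_yv h0 i) (hd 0), Lb_yv h0,
    Lb_pd hU hv hp j i.succ, Lb_pd hU hv hp j 0]
  rw [db_eq, db_eq]
  simp only [Fin.succ_ne_zero i, if_false, if_pos rfl, Fin.succ_inj]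
  by_cases hij : i = j
  · subst hij; simp; ring
  · simp [hij]; ring

lemma comm_Td {U : Set (Pt n)} (hU : IsOpen U) {v : Pt n → ℝ}
    (hv : ContDiffOn ℝ (⊤:ℕ∞) v U) {p : Pt n} (hp : p ∈ U) (h0 : rad p < p 0)
    (j : Fin n) (α : Fin (n+1)) :
    Lb j (Td α v) p = Td α (Lb j v) p - yv j p * Td α v p
      - (if α = 0 then Td j.succ v p else if α = j.succ then Td 0 v p else 0) := by
  have hd : ∀ β : Fin (n+1), DifferentiableAt ℝ (pd β v) p :=
    fun β => diffAt_of_contDiffOn hU (contDiffOn_pd hU hv β) hp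
  have e : Td α v = fun q => (fun q => wf q) q * (fun q => pd α v q) q := Td_eq α v
  rw [e, Lb_mul (diffAt_wf h0) (hd α), Lb_wf h0, Lb_pd hU hv hp j α]
  simp only [Td_eq]
  by_cases ha : α = 0
  · subst ha; simp; ring
  · by_cases hb : α = j.succ
    · subst hb; simp [Fin.succ_ne_zero j]; ring
    · simp [ha, hb]; ring

lemma diffAt_listSum {ι : Type*} {L : List ι} {F : ι → Pt n → ℝ} {p : Pt n}
    (h : ∀ x ∈ L, DifferentiableAt ℝ (F x) p) :
    DifferentiableAt ℝ (fun q => (L.map fun x => F x q).sum) p := by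
  induction L with
  | nil => simpa using differentiableAt_const (0:ℝ)
  | cons a t ih =>
    simp only [List.map_cons, List.sum_cons]
    exact (h a (List.mem_cons_self)).add (ih fun x hx => h x (List.mem_cons_of_mem a hx))

lemma Lb_listSum {ι : Type*} {L : List ι} {F : ι → Pt n → ℝ} {p : Pt n}
    (h : ∀ x ∈ L, DifferentiableAt ℝ (F x) p) (j : Fin n) :
    Lb j (fun q => (L.map fun x => F x q).sum) p = (L.map fun x => Lb j (F x) p).sum := by
  induction L with
  | nil => simpa using Lb_const 0 j p
  | cons a t ih =>
    simp only [List.map_cons, List.sum_cons]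
    rw [show (fun q => F a q + (t.map fun x => F x q).sum)
        = fun q => F a q + (fun q => (t.map fun x => F x q).sum) q from rfl] at *
    rw [Lb_add (h a (List.mem_cons_self))
      (diffAt_listSum fun x hx => h x (List.mem_cons_of_mem a hx)) j,
      ih fun x hx => h x (List.mem_cons_of_mem a hx)]

lemma listSum_add {ι : Type*} (L : List ι) (f g : ι → ℝ) :
    (L.map fun x => f x + g x).sum = (L.map f).sum + (L.map g).sum := by
  induction L with
  | nil => simp
  | cons a t ih => simp [ih]; ring

lemma abs_listSum_le {ι : Type*} (L : List ι) (f : ι → ℝ) :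
    |(L.map f).sum| ≤ (L.map fun x => |f x|).sum := by
  induction L with
  | nil => simp
  | cons a t ih =>
    simp only [List.map_cons, List.sum_cons]
    exact (abs_add_le _ _).trans (by linarith)

lemma listSum_le {ι : Type*} (L : List ι) (f g : ι → ℝ) (h : ∀ x ∈ L, f x ≤ g x) :
    (L.map f).sum ≤ (L.map g).sum := by
  induction L with
  | nil => simp
  | cons a t ih =>
    simp only [List.map_cons, List.sum_cons]
    exact add_le_add (h a (List.mem_cons_self)) (ih fun x hx => h x (List.mem_cons_of_mem a hx))

lemma listSum_nonneg {ι : Type*} (L : List ι) (f : ι → ℝ) (h : ∀ x ∈ L, 0 ≤ f x) :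
    0 ≤ (L.map f).sum := by
  have := listSum_le L (fun _ => 0) f h
  simpa using this

end Aux


namespace Aux

inductive CE (n : ℕ) : Type
  | zero : CE n
  | one : CE n
  | y : Fin n → CE n
  | neg : CE n → CE n
  | add : CE n → CE n → CE n
  | mul : CE n → CE n → CE n

def ev : CE n → Pt n → ℝ
  | .zero => fun _ => 0
  | .one => fun _ => 1
  | .y i => yv i
  | .neg a => fun p => -(ev a p)
  | .add a b => fun p => ev a p + ev b p
  | .mul a b => fun p => ev a p * ev b p

def bnd : CE n → ℝ
  | .zero => 0
  | .one => 1
  | .y _ => 1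
  | .neg a => bnd a
  | .add a b => bnd a + bnd b
  | .mul a b => bnd a * bnd b

def LbC (j : Fin n) : CE n → CE n
  | .zero => .zero
  | .one => .zero
  | .y i => .add (if i = j then .one else .zero) (.neg (.mul (.y i) (.y j)))
  | .neg a => .neg (LbC j a)
  | .add a b => .add (LbC j a) (LbC j b)
  | .mul a b => .add (.mul (LbC j a) b) (.mul a (LbC j b))

lemma bnd_nonneg (e : CE n) : 0 ≤ bnd e := by
  induction e with
  | zero => exact le_refl 0
  | one => exact zero_le_one
  | y i => exact zero_le_one
  | neg a ih => exact ih
  | add a b iha ihb => exact add_nonneg iha ihb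
  | mul a b iha ihb => exact mul_nonneg iha ihb

lemma contDiffOn_ev (e : CE n) : ContDiffOn ℝ (⊤:ℕ∞) (ev e) {p : Pt n | p 0 ≠ 0} := by
  induction e with
  | zero => exact contDiffOn_const
  | one => exact contDiffOn_const
  | y i => exact contDiffOn_yv i
  | neg a ih => exact ih.neg
  | add a b iha ihb => exact iha.add ihb
  | mul a b iha ihb => exact iha.mul ihb

lemma diffAt_ev {p : Pt n} (h : p 0 ≠ 0) (e : CE n) : DifferentiableAt ℝ (ev e) p :=
  diffAt_of_contDiffOn isOpen_Om (contDiffOn_ev e) h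

lemma abs_coord_le_rad (p : Pt n) (i : Fin n) : |p i.succ| ≤ rad p := by
  rw [rad, ← Real.sqrt_sq_eq_abs]
  apply Real.sqrt_le_sqrt
  exact Finset.single_le_sum (f := fun k : Fin n => p k.succ ^ 2)
    (fun k _ => sq_nonneg _) (Finset.mem_univ i)

lemma ev_bound {p : Pt n} (h0 : 0 < p 0) (hr : rad p ≤ p 0) (e : CE n) :
    |ev e p| ≤ bnd e := by
  induction e with
  | zero => simp [ev, bnd]
  | one => simp [ev, bnd]
  | y i =>
    have : |yv i p| = |p i.succ| / p 0 := by
      rw [yv, abs_div, abs_of_pos h0]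
    rw [ev, this, bnd]
    rw [div_le_one h0]
    exact (abs_coord_le_rad p i).trans hr
  | neg a ih => simpa [ev, bnd] using ih
  | add a b iha ihb => exact (abs_add_le _ _).trans (add_le_add iha ihb)
  | mul a b iha ihb =>
    rw [ev, bnd, abs_mul]
    exact mul_le_mul iha ihb (abs_nonneg _) ((abs_nonneg _).trans iha)

lemma Lb_neg {a : Pt n → ℝ} {p : Pt n} (j : Fin n) :
    Lb j (fun q => -(a q)) p = -(Lb j a p) := by
  have : ∀ β : Fin (n+1), pd β (fun q => -(a q)) p = -(pd β a p) := by
    intro β; simp [pd, fderiv_neg]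
  simp only [Lb, this]; ring

lemma Lb_ev {p : Pt n} (h : p 0 ≠ 0) (j : Fin n) (e : CE n) :
    Lb j (ev e) p = ev (LbC j e) p := by
  induction e with
  | zero => exact Lb_const 0 j p
  | one => exact Lb_const 1 j p
  | y i =>
    rw [show ev (CE.y i) = yv i from rfl, Lb_yv h]
    by_cases hij : i = j <;> simp [hij, LbC, ev] <;> ring
  | neg a ih =>
    rw [show ev (CE.neg a) = fun q => -(ev a q) from rfl, Lb_neg, ih, LbC]
    rfl
  | add a b iha ihb =>
    rw [show ev (CE.add a b) = fun q => ev a q + ev b q from rfl,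
      Lb_add (diffAt_ev h a) (diffAt_ev h b), iha, ihb, LbC]
    rfl
  | mul a b iha ihb =>
    rw [show ev (CE.mul a b) = fun q => ev a q * ev b q from rfl,
      Lb_mul (diffAt_ev h a) (diffAt_ev h b), iha, ihb, LbC]
    rfl

end Aux


namespace Aux

lemma repA (I : List (Fin n)) (i : Fin n) :
    ∃ L : List (CE n × List (Fin n) × Fin n),
      (∀ x ∈ L, x.2.1.length < I.length) ∧
      ∀ U : Set (Pt n), IsOpen U → ∀ u : Pt n → ℝ, ContDiffOn ℝ (⊤:ℕ∞) u U →
        ∀ p ∈ U, p 0 ≠ 0 →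
          HI I (db i u) p = db i (HI I u) p
            + (L.map fun x => ev x.1 p * db x.2.2 (HI x.2.1 u) p).sum := by
  induction I with
  | nil =>
    refine ⟨[], by simp, ?_⟩
    intro U hU u hu p hp h0
    simp [HI]
  | cons j I ih =>
    obtain ⟨L, hlen, hrep⟩ := ih
    refine ⟨(CE.neg (CE.y i), I, j)
        :: (L.map (fun x => (LbC j x.1, x.2.1, x.2.2))
          ++ L.map (fun x => (x.1, j :: x.2.1, x.2.2))
          ++ L.map (fun x => (CE.neg (CE.mul x.1 (CE.y x.2.2)), x.2.1, j))), ?_, ?_⟩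
    · intro x hx
      rcases List.mem_cons.mp hx with h | h
      · subst h; simp
      · rcases List.mem_append.mp h with h | h
        · rcases List.mem_append.mp h with h | h <;>
          · obtain ⟨y, hy, rfl⟩ := List.mem_map.mp h
            simp only [List.length_cons]
            first
            | exact (hlen y hy).trans (Nat.lt_succ_self _)
            | exact Nat.succ_lt_succ (hlen y hy)
        · obtain ⟨y, hy, rfl⟩ := List.mem_map.mp h
          exact (hlen y hy).trans (Nat.lt_succ_self _)
    · intro U hU u hu p hp h0
      -- abbreviations
      have hHIu : ∀ J : List (Fin n), ContDiffOn ℝ (⊤:ℕ∞) (HI J u) U :=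
        fun J => contDiffOn_HI hU hu J
      have hdiff_db : ∀ (l : Fin n) (J : List (Fin n)), DifferentiableAt ℝ (db l (HI J u)) p :=
        fun l J => diffAt_db hU (hHIu J) hp h0 l
      have hdF : ∀ x ∈ L, DifferentiableAt ℝ
          (fun q => ev x.1 q * db x.2.2 (HI x.2.1 u) q) p :=
        fun x _ => (diffAt_ev h0 x.1).mul (hdiff_db x.2.2 x.2.1)
      -- step 1+2 : congruence
      have hcong : HI (j :: I) (db i u) p
          = Lb j (fun q => db i (HI I u) q
              + (fun q => (L.map fun x => ev x.1 q * db x.2.2 (HI x.2.1 u) q).sum) q) p := by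
        show Lb j (HI I (db i u)) p = _
        apply Lb_congr
        filter_upwards [(hU.inter isOpen_Om).mem_nhds ⟨hp, h0⟩] with q hq
        exact hrep U hU u hu q hq.1 hq.2
      rw [hcong, Lb_add (hdiff_db i I) (diffAt_listSum hdF),
        Lb_listSum hdF, comm_db hU (hHIu I) hp h0 i j]
      -- rewrite each summand
      have hterm : ∀ x ∈ L,
          Lb j (fun q => ev x.1 q * db x.2.2 (HI x.2.1 u) q) p
            = ev (LbC j x.1) p * db x.2.2 (HI x.2.1 u) p
              + (ev x.1 p * db x.2.2 (HI (j :: x.2.1) u) p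
                + (-(ev x.1 p * yv x.2.2 p)) * db j (HI x.2.1 u) p) := by
        intro x _
        rw [Lb_mul (diffAt_ev h0 x.1) (hdiff_db x.2.2 x.2.1), Lb_ev h0,
          comm_db hU (hHIu x.2.1) hp h0 x.2.2 j]
        show _ = _ + (ev x.1 p * db x.2.2 (Lb j (HI x.2.1 u)) p + _)
        ring
      rw [List.map_congr_left hterm, listSum_add, listSum_add]
      -- identify the three sums with mapped lists
      have m1 : (L.map fun x => ev (LbC j x.1) p * db x.2.2 (HI x.2.1 u) p)
          = ((L.map (fun x => (LbC j x.1, x.2.1, x.2.2))).map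
              fun x => ev x.1 p * db x.2.2 (HI x.2.1 u) p) := by
        rw [List.map_map]; rfl
      have m2 : (L.map fun x => ev x.1 p * db x.2.2 (HI (j :: x.2.1) u) p)
          = ((L.map (fun x => (x.1, j :: x.2.1, x.2.2))).map
              fun x => ev x.1 p * db x.2.2 (HI x.2.1 u) p) := by
        rw [List.map_map]; rfl
      have m3 : (L.map fun x => (-(ev x.1 p * yv x.2.2 p)) * db j (HI x.2.1 u) p)
          = ((L.map (fun x => (CE.neg (CE.mul x.1 (CE.y x.2.2)), x.2.1, j))).map
              fun x => ev x.1 p * db x.2.2 (HI x.2.1 u) p) := by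
        rw [List.map_map]; rfl
      rw [m1, m2, m3]
      simp only [List.map_cons, List.sum_cons, List.map_append, List.sum_append]
      show db i (HI (j :: I) u) p - yv i p * db j (HI I u) p + _ = _
      have : ev (CE.neg (CE.y i)) p = -(yv i p) := rfl
      rw [this]
      ring

end Aux


namespace Aux

def sw (j : Fin n) (β : Fin (n+1)) : Fin (n+1) :=
  if β = 0 then j.succ else if β = j.succ then 0 else β

def swc (e : CE n) (j : Fin n) (β : Fin (n+1)) : CE n :=
  if β = 0 ∨ β = j.succ then CE.neg e else CE.zero

lemma swc_eval {p : Pt n} (e : CE n) (j : Fin n) (β : Fin (n+1)) (v : Pt n → ℝ) :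
    ev (swc e j β) p * Td (sw j β) v p
      = ev e p * (-(if β = 0 then Td j.succ v p else if β = j.succ then Td 0 v p else 0)) := by
  by_cases h0 : β = 0
  · subst h0; simp [swc, sw, ev]; try ring
  · by_cases h1 : β = j.succ
    · subst h1; simp [swc, sw, ev, Fin.succ_ne_zero j]; try ring
    · simp [swc, sw, ev, h0, h1]

lemma repB (I : List (Fin n)) (α : Fin (n+1)) :
    ∃ L : List (CE n × List (Fin n) × Fin (n+1)),
      (∀ x ∈ L, x.2.1.length < I.length) ∧
      ∀ U : Set (Pt n), IsOpen U → ∀ u : Pt n → ℝ, ContDiffOn ℝ (⊤:ℕ∞) u U →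
        ∀ p ∈ U, rad p < p 0 →
          HI I (Td α u) p = Td α (HI I u) p
            + (L.map fun x => ev x.1 p * Td x.2.2 (HI x.2.1 u) p).sum := by
  induction I with
  | nil =>
    refine ⟨[], by simp, ?_⟩
    intro U hU u hu p hp h0
    simp [HI]
  | cons j I ih =>
    obtain ⟨L, hlen, hrep⟩ := ih
    refine ⟨(CE.neg (CE.y j), I, α) :: (swc CE.one j α, I, sw j α)
        :: (L.map (fun x => (LbC j x.1, x.2.1, x.2.2))
          ++ L.map (fun x => (x.1, j :: x.2.1, x.2.2))
          ++ L.map (fun x => (CE.neg (CE.mul x.1 (CE.y j)), x.2.1, x.2.2))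
          ++ L.map (fun x => (swc x.1 j x.2.2, x.2.1, sw j x.2.2))), ?_, ?_⟩
    · intro x hx
      rcases List.mem_cons.mp hx with h | h
      · subst h; simp
      rcases List.mem_cons.mp h with h | h
      · subst h; simp
      rcases List.mem_append.mp h with h | h
      · rcases List.mem_append.mp h with h | h
        · rcases List.mem_append.mp h with h | h <;>
          · obtain ⟨y, hy, rfl⟩ := List.mem_map.mp h
            simp only [List.length_cons]
            first
            | exact (hlen y hy).trans (Nat.lt_succ_self _)
            | exact Nat.succ_lt_succ (hlen y hy)
        · obtain ⟨y, hy, rfl⟩ := List.mem_map.mp h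
          exact (hlen y hy).trans (Nat.lt_succ_self _)
      · obtain ⟨y, hy, rfl⟩ := List.mem_map.mp h
        exact (hlen y hy).trans (Nat.lt_succ_self _)
    · intro U hU u hu p hp h0
      have h0' : p 0 ≠ 0 := (Om'_pos h0).ne'
      have hHIu : ∀ J : List (Fin n), ContDiffOn ℝ (⊤:ℕ∞) (HI J u) U :=
        fun J => contDiffOn_HI hU hu J
      have hdiff_Td : ∀ (β : Fin (n+1)) (J : List (Fin n)),
          DifferentiableAt ℝ (Td β (HI J u)) p :=
        fun β J => diffAt_Td hU (hHIu J) hp h0 β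
      have hdF : ∀ x ∈ L, DifferentiableAt ℝ
          (fun q => ev x.1 q * Td x.2.2 (HI x.2.1 u) q) p :=
        fun x _ => (diffAt_ev h0' x.1).mul (hdiff_Td x.2.2 x.2.1)
      have hcong : HI (j :: I) (Td α u) p
          = Lb j (fun q => Td α (HI I u) q
              + (fun q => (L.map fun x => ev x.1 q * Td x.2.2 (HI x.2.1 u) q).sum) q) p := by
        show Lb j (HI I (Td α u)) p = _
        apply Lb_congr
        filter_upwards [(hU.inter isOpen_Om').mem_nhds ⟨hp, h0⟩] with q hq
        exact hrep U hU u hu q hq.1 hq.2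
      rw [hcong, Lb_add (hdiff_Td α I) (diffAt_listSum hdF),
        Lb_listSum hdF, comm_Td hU (hHIu I) hp h0 j α]
      have hterm : ∀ x ∈ L,
          Lb j (fun q => ev x.1 q * Td x.2.2 (HI x.2.1 u) q) p
            = ev (LbC j x.1) p * Td x.2.2 (HI x.2.1 u) p
              + (ev x.1 p * Td x.2.2 (HI (j :: x.2.1) u) p
                + ((-(ev x.1 p * yv j p)) * Td x.2.2 (HI x.2.1 u) p
                  + ev (swc x.1 j x.2.2) p * Td (sw j x.2.2) (HI x.2.1 u) p)) := by
        intro x _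
        rw [Lb_mul (diffAt_ev h0' x.1) (hdiff_Td x.2.2 x.2.1), Lb_ev h0',
          comm_Td hU (hHIu x.2.1) hp h0 j x.2.2, swc_eval]
        show _ = _ + (ev x.1 p * Td x.2.2 (Lb j (HI x.2.1 u)) p + _)
        ring
      rw [List.map_congr_left hterm, listSum_add, listSum_add, listSum_add]
      have m1 : (L.map fun x => ev (LbC j x.1) p * Td x.2.2 (HI x.2.1 u) p)
          = ((L.map (fun x => (LbC j x.1, x.2.1, x.2.2))).map
              fun x => ev x.1 p * Td x.2.2 (HI x.2.1 u) p) := by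
        rw [List.map_map]; rfl
      have m2 : (L.map fun x => ev x.1 p * Td x.2.2 (HI (j :: x.2.1) u) p)
          = ((L.map (fun x => (x.1, j :: x.2.1, x.2.2))).map
              fun x => ev x.1 p * Td x.2.2 (HI x.2.1 u) p) := by
        rw [List.map_map]; rfl
      have m3 : (L.map fun x => (-(ev x.1 p * yv j p)) * Td x.2.2 (HI x.2.1 u) p)
          = ((L.map (fun x => (CE.neg (CE.mul x.1 (CE.y j)), x.2.1, x.2.2))).map
              fun x => ev x.1 p * Td x.2.2 (HI x.2.1 u) p) := by
        rw [List.map_map]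
        apply List.map_congr_left
        intro x _
        show -(ev x.1 p * yv j p) * _ = (-(ev x.1 p * yv j p)) * _
        rfl
      have m4 : (L.map fun x => ev (swc x.1 j x.2.2) p * Td (sw j x.2.2) (HI x.2.1 u) p)
          = ((L.map (fun x => (swc x.1 j x.2.2, x.2.1, sw j x.2.2))).map
              fun x => ev x.1 p * Td x.2.2 (HI x.2.1 u) p) := by
        rw [List.map_map]; rfl
      rw [m1, m2, m3, m4]
      simp only [List.map_cons, List.sum_cons, List.map_append, List.sum_append]
      have hh1 : ev (CE.neg (CE.y j)) p = -(yv j p) := rfl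
      have hh2 : ev (swc CE.one j α) p * Td (sw j α) (HI I u) p
          = -(if α = 0 then Td j.succ (HI I u) p else if α = j.succ then Td 0 (HI I u) p else 0) := by
        have := swc_eval (p := p) CE.one j α (HI I u)
        simpa [ev] using this
      have hLb : Td α (Lb j (HI I u)) p = Td α (HI (j :: I) u) p := rfl
      rw [hLb, hh1, hh2]
      ring

end Aux


namespace Aux

lemma listSum_mul {ι : Type*} (L : List ι) (f : ι → ℝ) (c : ℝ) :
    (L.map fun x => f x * c).sum = (L.map f).sum * c := by
  induction L with
  | nil => simp
  | cons a t ih => simp [ih]; ring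

lemma estA (plen : ℕ) :
    ∃ C : ℝ, 0 ≤ C ∧ ∀ U : Set (Pt n), IsOpen U → ∀ u : Pt n → ℝ, ContDiffOn ℝ (⊤:ℕ∞) u U →
      ∀ p ∈ U, 0 < p 0 → rad p ≤ p 0 → ∀ (i : Fin n) (I : Fin plen → Fin n),
        |HI (List.ofFn I) (db i u) p| ≤ |db i (HI (List.ofFn I) u) p|
          + C * ∑ k ∈ Finset.range plen, ∑ J : Fin k → Fin n, ∑ l : Fin n,
              |db l (HI (List.ofFn J) u) p| := by
  classical
  set Φ : (Fin n × (Fin plen → Fin n)) → List (CE n × List (Fin n) × Fin n) :=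
    fun x => (repA (List.ofFn x.2) x.1).choose with hΦ
  refine ⟨∑ x : Fin n × (Fin plen → Fin n), ((Φ x).map fun y => bnd y.1).sum, ?_, ?_⟩
  · exact Finset.sum_nonneg fun x _ =>
      listSum_nonneg _ _ fun y _ => bnd_nonneg y.1
  intro U hU u hu p hp h0 hr i I
  obtain ⟨hlen, hrep⟩ := (repA (n := n) (List.ofFn I) i).choose_spec
  set L := Φ (i, I) with hL
  have hLdef : L = (repA (n := n) (List.ofFn I) i).choose := rfl
  set S := ∑ k ∈ Finset.range plen, ∑ J : Fin k → Fin n, ∑ l : Fin n,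
      |db l (HI (List.ofFn J) u) p| with hS
  have hSnn : 0 ≤ S :=
    Finset.sum_nonneg fun k _ => Finset.sum_nonneg fun J _ =>
      Finset.sum_nonneg fun l _ => abs_nonneg _
  have hid := hrep U hU u hu p hp h0.ne'
  have hsingle : ∀ x ∈ L, |db x.2.2 (HI x.2.1 u) p| ≤ S := by
    intro x hx
    rw [hLdef] at hx
    have hk : x.2.1.length < plen := by
      have := hlen x hx
      simpa using this
    have hofn : List.ofFn x.2.1.get = x.2.1 := List.ofFn_get _
    have step1 : |db x.2.2 (HI x.2.1 u) p|
        ≤ ∑ l : Fin n, |db l (HI (List.ofFn x.2.1.get) u) p| := by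
      rw [hofn]
      exact Finset.single_le_sum (f := fun l : Fin n => |db l (HI x.2.1 u) p|)
        (fun l _ => abs_nonneg _) (Finset.mem_univ x.2.2)
    have step2 : (∑ l : Fin n, |db l (HI (List.ofFn x.2.1.get) u) p|)
        ≤ ∑ J : Fin x.2.1.length → Fin n, ∑ l : Fin n, |db l (HI (List.ofFn J) u) p| :=
      Finset.single_le_sum
        (f := fun J : Fin x.2.1.length → Fin n => ∑ l : Fin n, |db l (HI (List.ofFn J) u) p|)
        (fun J _ => Finset.sum_nonneg fun l _ => abs_nonneg _) (Finset.mem_univ x.2.1.get)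
    have step3 : (∑ J : Fin x.2.1.length → Fin n, ∑ l : Fin n, |db l (HI (List.ofFn J) u) p|)
        ≤ S :=
      Finset.single_le_sum
        (f := fun k => ∑ J : Fin k → Fin n, ∑ l : Fin n, |db l (HI (List.ofFn J) u) p|)
        (fun k _ => Finset.sum_nonneg fun J _ => Finset.sum_nonneg fun l _ => abs_nonneg _)
        (Finset.mem_range.mpr hk)
    exact step1.trans (step2.trans step3)
  calc |HI (List.ofFn I) (db i u) p|
      = |db i (HI (List.ofFn I) u) p
          + (L.map fun x => ev x.1 p * db x.2.2 (HI x.2.1 u) p).sum| := by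
        rw [hLdef]; rw [hid]
    _ ≤ |db i (HI (List.ofFn I) u) p|
          + |(L.map fun x => ev x.1 p * db x.2.2 (HI x.2.1 u) p).sum| := abs_add_le _ _
    _ ≤ |db i (HI (List.ofFn I) u) p|
          + (L.map fun x => |ev x.1 p * db x.2.2 (HI x.2.1 u) p|).sum := by
        gcongr
        exact abs_listSum_le L _
    _ ≤ |db i (HI (List.ofFn I) u) p| + (L.map fun x => bnd x.1 * S).sum := by
        gcongr
        apply listSum_le
        intro x hx
        rw [abs_mul]
        exact mul_le_mul (ev_bound h0 hr x.1) (hsingle x hx) (abs_nonneg _)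
          (bnd_nonneg x.1)
    _ ≤ |db i (HI (List.ofFn I) u) p|
          + (∑ x : Fin n × (Fin plen → Fin n), ((Φ x).map fun y => bnd y.1).sum) * S := by
        rw [listSum_mul]
        gcongr
        have : ((L.map fun y => bnd y.1).sum)
            = ((Φ (i, I)).map fun y => bnd y.1).sum := rfl
        rw [this]
        exact Finset.single_le_sum
          (f := fun x : Fin n × (Fin plen → Fin n) => ((Φ x).map fun y => bnd y.1).sum)
          (fun x _ => listSum_nonneg _ _ fun y _ => bnd_nonneg y.1) (Finset.mem_univ (i, I))

lemma estB (plen : ℕ) :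
    ∃ C : ℝ, 0 ≤ C ∧ ∀ U : Set (Pt n), IsOpen U → ∀ u : Pt n → ℝ, ContDiffOn ℝ (⊤:ℕ∞) u U →
      ∀ p ∈ U, rad p < p 0 → ∀ (I : Fin plen → Fin n) (α : Fin (n+1)),
        |HI (List.ofFn I) (Td α u) p| ≤ |Td α (HI (List.ofFn I) u) p|
          + C * ∑ k ∈ Finset.range plen, ∑ J : Fin k → Fin n, ∑ β : Fin (n+1),
              |Td β (HI (List.ofFn J) u) p| := by
  classical
  set Φ : ((Fin plen → Fin n) × Fin (n+1)) → List (CE n × List (Fin n) × Fin (n+1)) :=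
    fun x => (repB (List.ofFn x.1) x.2).choose with hΦ
  refine ⟨∑ x : (Fin plen → Fin n) × Fin (n+1), ((Φ x).map fun y => bnd y.1).sum, ?_, ?_⟩
  · exact Finset.sum_nonneg fun x _ =>
      listSum_nonneg _ _ fun y _ => bnd_nonneg y.1
  intro U hU u hu p hp h0 I α
  have h0' : 0 < p 0 := Om'_pos h0
  obtain ⟨hlen, hrep⟩ := (repB (n := n) (List.ofFn I) α).choose_spec
  set L := Φ (I, α) with hL
  have hLdef : L = (repB (n := n) (List.ofFn I) α).choose := rfl
  set S := ∑ k ∈ Finset.range plen, ∑ J : Fin k → Fin n, ∑ β : Fin (n+1),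
      |Td β (HI (List.ofFn J) u) p| with hS
  have hSnn : 0 ≤ S :=
    Finset.sum_nonneg fun k _ => Finset.sum_nonneg fun J _ =>
      Finset.sum_nonneg fun β _ => abs_nonneg _
  have hid := hrep U hU u hu p hp h0
  have hsingle : ∀ x ∈ L, |Td x.2.2 (HI x.2.1 u) p| ≤ S := by
    intro x hx
    rw [hLdef] at hx
    have hk : x.2.1.length < plen := by
      have := hlen x hx
      simpa using this
    have hofn : List.ofFn x.2.1.get = x.2.1 := List.ofFn_get _
    have step1 : |Td x.2.2 (HI x.2.1 u) p|
        ≤ ∑ β : Fin (n+1), |Td β (HI (List.ofFn x.2.1.get) u) p| := by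
      rw [hofn]
      exact Finset.single_le_sum (f := fun β : Fin (n+1) => |Td β (HI x.2.1 u) p|)
        (fun β _ => abs_nonneg _) (Finset.mem_univ x.2.2)
    have step2 : (∑ β : Fin (n+1), |Td β (HI (List.ofFn x.2.1.get) u) p|)
        ≤ ∑ J : Fin x.2.1.length → Fin n, ∑ β : Fin (n+1), |Td β (HI (List.ofFn J) u) p| :=
      Finset.single_le_sum
        (f := fun J : Fin x.2.1.length → Fin n => ∑ β : Fin (n+1), |Td β (HI (List.ofFn J) u) p|)
        (fun J _ => Finset.sum_nonneg fun β _ => abs_nonneg _) (Finset.mem_univ x.2.1.get)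
    have step3 : (∑ J : Fin x.2.1.length → Fin n, ∑ β : Fin (n+1), |Td β (HI (List.ofFn J) u) p|)
        ≤ S :=
      Finset.single_le_sum
        (f := fun k => ∑ J : Fin k → Fin n, ∑ β : Fin (n+1), |Td β (HI (List.ofFn J) u) p|)
        (fun k _ => Finset.sum_nonneg fun J _ => Finset.sum_nonneg fun β _ => abs_nonneg _)
        (Finset.mem_range.mpr hk)
    exact step1.trans (step2.trans step3)
  calc |HI (List.ofFn I) (Td α u) p|
      = |Td α (HI (List.ofFn I) u) p
          + (L.map fun x => ev x.1 p * Td x.2.2 (HI x.2.1 u) p).sum| := by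
        rw [hLdef]; rw [hid]
    _ ≤ |Td α (HI (List.ofFn I) u) p|
          + |(L.map fun x => ev x.1 p * Td x.2.2 (HI x.2.1 u) p).sum| := abs_add_le _ _
    _ ≤ |Td α (HI (List.ofFn I) u) p|
          + (L.map fun x => |ev x.1 p * Td x.2.2 (HI x.2.1 u) p|).sum := by
        gcongr
        exact abs_listSum_le L _
    _ ≤ |Td α (HI (List.ofFn I) u) p| + (L.map fun x => bnd x.1 * S).sum := by
        gcongr
        apply listSum_le
        intro x hx
        rw [abs_mul]
        exact mul_le_mul (ev_bound h0' h0.le x.1) (hsingle x hx) (abs_nonneg _)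
          (bnd_nonneg x.1)
    _ ≤ |Td α (HI (List.ofFn I) u) p|
          + (∑ x : (Fin plen → Fin n) × Fin (n+1), ((Φ x).map fun y => bnd y.1).sum) * S := by
        rw [listSum_mul]
        gcongr
        have : ((L.map fun y => bnd y.1).sum)
            = ((Φ (I, α)).map fun y => bnd y.1).sum := rfl
        rw [this]
        exact Finset.single_le_sum
          (f := fun x : (Fin plen → Fin n) × Fin (n+1) => ((Φ x).map fun y => bnd y.1).sum)
          (fun x _ => listSum_nonneg _ _ fun y _ => bnd_nonneg y.1) (Finset.mem_univ (I, α))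

end Aux


/-- commutator estimates between iterated boosts and the operators
`∂̄_i` (inside the cone `{0 < t, |x| ≤ t}`) and `(T/t)∂_α` (inside `{|x| < t}`). -/
theorem boost_db_Td_commutator_estimates (n plen : ℕ) (hn : 1 ≤ n) (hp : 1 ≤ plen) :
    ∃ C > (0 : ℝ),
      ∀ U : Set (Fin (n + 1) → ℝ), IsOpen U →
      ∀ u : (Fin (n + 1) → ℝ) → ℝ, ContDiffOn ℝ (⊤ : ℕ∞) u U →
        (∀ p ∈ U, 0 < p 0 → rad p ≤ p 0 →
          ∑ i : Fin n, ∑ I : Fin plen → Fin n, |HI (List.ofFn I) (db i u) p|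
            ≤ ∑ i : Fin n, ∑ I : Fin plen → Fin n, |db i (HI (List.ofFn I) u) p|
              + C * ∑ k ∈ Finset.range plen, ∑ J : Fin k → Fin n, ∑ j : Fin n,
                  |db j (HI (List.ofFn J) u) p|)
        ∧ (∀ p ∈ U, rad p < p 0 → ∀ I : Fin plen → Fin n, ∀ α : Fin (n + 1),
            |HI (List.ofFn I) (Td α u) p|
              ≤ |Td α (HI (List.ofFn I) u) p|
                + C * ∑ k ∈ Finset.range plen, ∑ J : Fin k → Fin n,
                    ∑ β : Fin (n + 1), |Td β (HI (List.ofFn J) u) p|) := by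
  classical
  obtain ⟨CA, hCA0, hCA⟩ := Aux.estA (n := n) plen
  obtain ⟨CB, hCB0, hCB⟩ := Aux.estB (n := n) plen
  set cc : ℝ := ((Fintype.card (Fin n) * Fintype.card (Fin plen → Fin n) : ℕ) : ℝ) with hcc
  have hcc0 : 0 ≤ cc := by positivity
  refine ⟨cc * CA + CB + 1, by nlinarith [mul_nonneg hcc0 hCA0], ?_⟩
  intro U hU u hu
  constructor
  · intro p hp h0 hr
    set S := ∑ k ∈ Finset.range plen, ∑ J : Fin k → Fin n, ∑ j : Fin n,
        |db j (HI (List.ofFn J) u) p| with hS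
    have hSnn : 0 ≤ S :=
      Finset.sum_nonneg fun k _ => Finset.sum_nonneg fun J _ =>
        Finset.sum_nonneg fun j _ => abs_nonneg _
    calc ∑ i : Fin n, ∑ I : Fin plen → Fin n, |HI (List.ofFn I) (db i u) p|
        ≤ ∑ i : Fin n, ∑ I : Fin plen → Fin n,
            (|db i (HI (List.ofFn I) u) p| + CA * S) :=
          Finset.sum_le_sum fun i _ => Finset.sum_le_sum fun I _ =>
            hCA U hU u hu p hp h0 hr i I
      _ = (∑ i : Fin n, ∑ I : Fin plen → Fin n, |db i (HI (List.ofFn I) u) p|)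
            + cc * (CA * S) := by
          simp only [Finset.sum_add_distrib]
          congr 1
          simp only [Finset.sum_const, Finset.card_univ, smul_smul, nsmul_eq_mul, hcc]
          push_cast
          ring
      _ ≤ (∑ i : Fin n, ∑ I : Fin plen → Fin n, |db i (HI (List.ofFn I) u) p|)
            + (cc * CA + CB + 1) * S := by
          have h3 : 0 ≤ (CB + 1) * S := mul_nonneg (by linarith) hSnn
          have heq : (cc * CA + CB + 1) * S = cc * (CA * S) + (CB + 1) * S := by ring
          linarith
  · intro p hp h0 I α
    set S := ∑ k ∈ Finset.range plen, ∑ J : Fin k → Fin n, ∑ β : Fin (n+1),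
        |Td β (HI (List.ofFn J) u) p| with hS
    have hSnn : 0 ≤ S :=
      Finset.sum_nonneg fun k _ => Finset.sum_nonneg fun J _ =>
        Finset.sum_nonneg fun β _ => abs_nonneg _
    have h1 := hCB U hU u hu p hp h0 I α
    have h2 : CB * S ≤ (cc * CA + CB + 1) * S := by
      apply mul_le_mul_of_nonneg_right _ hSnn
      nlinarith [mul_nonneg hcc0 hCA0]
    calc |HI (List.ofFn I) (Td α u) p|
        ≤ |Td α (HI (List.ofFn I) u) p| + CB * S := h1
      _ ≤ |Td α (HI (List.ofFn I) u) p| + (cc * CA + CB + 1) * S := by linarith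
end
end
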